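/- Let H be a real Banach space, A a continuous linear operator on H with ‖exp(tA)‖ ≤ M e^{−βt} for all t ≥ 0, where M ≥ 1 and β > 0. Let T > 0 and let y, R : [0,T] → H be continuous maps satisfying y(t) = exp(tA) y(0) + ∫₀ᵗ exp((t−s)A) R(s) ds for all t ∈ [0,T], together with the bound ‖R(s)‖ ≤ κ ‖y(s)‖ for all s ∈ [0,T], where κ ≥ 0 satisfies 4Mκ ≤ β. Then ‖y(t)‖ ≤ 2M ‖y(0)‖ e^{−βt/2} for all t ∈ [0,T]. -/

import Mathlib

open MeasureTheory

/-- Exponential decay for a mild solution of a semilinear equation with exponentially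
stable linear part and small state-proportional remainder: if
`y(t) = exp(tA) y(0) + ∫₀ᵗ exp((t−s)A) R(s) ds` with `‖R(s)‖ ≤ κ‖y(s)‖` and `4Mκ ≤ β`,
then `‖y(t)‖ ≤ 2M ‖y(0)‖ e^{−βt/2}`. -/
theorem decay_of_mild_solution_small_remainder
    {H : Type*} [NormedAddCommGroup H] [NormedSpace ℝ H] [CompleteSpace H]
    (A : H →L[ℝ] H) (M β : ℝ) (hM : 1 ≤ M) (hβ : 0 < β)
    (hdecay : ∀ t : ℝ, 0 ≤ t → ‖NormedSpace.exp (t • A)‖ ≤ M * Real.exp (-β * t))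
    (T : ℝ) (hT : 0 < T) (y R : ℝ → H)
    (hy : ContinuousOn y (Set.Icc 0 T)) (hR : ContinuousOn R (Set.Icc 0 T))
    (hmild : ∀ t ∈ Set.Icc (0 : ℝ) T,
      y t = NormedSpace.exp (t • A) (y 0)
        + ∫ s in (0 : ℝ)..t, NormedSpace.exp ((t - s) • A) (R s))
    (κ : ℝ) (hκ : 0 ≤ κ) (hsmall : 4 * M * κ ≤ β)
    (hRy : ∀ s ∈ Set.Icc (0 : ℝ) T, ‖R s‖ ≤ κ * ‖y s‖) :
    ∀ t ∈ Set.Icc (0 : ℝ) T, ‖y t‖ ≤ 2 * M * ‖y 0‖ * Real.exp (-β * t / 2) := by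
  have hM0 : (0 : ℝ) < M := lt_of_lt_of_le one_pos hM
  -- clamp function
  set c : ℝ → ℝ := fun s => max 0 (min s T) with hc
  have hcmem : ∀ s, c s ∈ Set.Icc 0 T := by
    intro s
    constructor
    · exact le_max_left _ _
    · exact max_le hT.le (min_le_right _ _)
  have hceq : ∀ s ∈ Set.Icc (0 : ℝ) T, c s = s := by
    intro s hs
    simp only [hc]
    rw [min_eq_left hs.2, max_eq_right hs.1]
  have hccont : Continuous c := continuous_const.max (continuous_id.min continuous_const)
  set w : ℝ → ℝ := fun s => Real.exp (β * c s) * ‖y (c s)‖ with hwdef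
  have hyc : Continuous fun s => y (c s) := hy.comp_continuous hccont hcmem
  have hwcont : Continuous w :=
    (Real.continuous_exp.comp (continuous_const.mul hccont)).mul hyc.norm
  have hwnonneg : ∀ s, 0 ≤ w s := fun s =>
    mul_nonneg (Real.exp_pos _).le (norm_nonneg _)
  set C := M * ‖y 0‖ with hCdef
  have hC0 : 0 ≤ C := mul_nonneg hM0.le (norm_nonneg _)
  set K := M * κ with hKdef
  have hK0 : 0 ≤ K := mul_nonneg hM0.le hκ
  -- key integral inequality
  have key : ∀ t ∈ Set.Icc (0 : ℝ) T, w t ≤ K * (∫ s in (0 : ℝ)..t, w s) + C := by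
    intro t ht
    obtain ⟨ht0, htT⟩ := ht
    have hsub : Set.Icc (0 : ℝ) t ⊆ Set.Icc 0 T := Set.Icc_subset_Icc le_rfl htT
    -- continuity of the integrand
    have hexp : Continuous fun s : ℝ => NormedSpace.exp ((t - s) • A) :=
      by letI : NormedAlgebra ℚ (H →L[ℝ] H) := NormedAlgebra.restrictScalars ℚ ℝ _
         exact NormedSpace.exp_continuous.comp ((continuous_const.sub continuous_id).smul continuous_const)
    have hgcont : ContinuousOn (fun s => NormedSpace.exp ((t - s) • A) (R s)) (Set.Icc 0 t) :=
      hexp.continuousOn.clm_apply (hR.mono hsub)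
    have hint1 : IntervalIntegrable (fun s => ‖NormedSpace.exp ((t - s) • A) (R s)‖)
        volume 0 t := by
      apply ContinuousOn.intervalIntegrable
      rw [Set.uIcc_of_le ht0]
      exact hgcont.norm
    have hint2 : IntervalIntegrable (fun s => M * Real.exp (-β * (t - s)) * (κ * ‖y s‖))
        volume 0 t := by
      apply ContinuousOn.intervalIntegrable
      rw [Set.uIcc_of_le ht0]
      exact (((continuous_const.mul (Real.continuous_exp.comp
        (continuous_const.mul (continuous_const.sub continuous_id)))).continuousOn).mul
        (continuousOn_const.mul (hy.mono hsub).norm))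
    have h1 : ‖y t‖ ≤ M * Real.exp (-β * t) * ‖y 0‖
        + ∫ s in (0 : ℝ)..t, M * Real.exp (-β * (t - s)) * (κ * ‖y s‖) := by
      rw [hmild t ⟨ht0, htT⟩]
      refine le_trans (norm_add_le _ _) (add_le_add ?_ ?_)
      · calc ‖NormedSpace.exp (t • A) (y 0)‖ ≤ ‖NormedSpace.exp (t • A)‖ * ‖y 0‖ :=
              ContinuousLinearMap.le_opNorm _ _
          _ ≤ M * Real.exp (-β * t) * ‖y 0‖ :=
              mul_le_mul_of_nonneg_right (hdecay t ht0) (norm_nonneg _)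
      · calc ‖∫ s in (0 : ℝ)..t, NormedSpace.exp ((t - s) • A) (R s)‖
            ≤ ∫ s in (0 : ℝ)..t, ‖NormedSpace.exp ((t - s) • A) (R s)‖ :=
              intervalIntegral.norm_integral_le_integral_norm ht0
          _ ≤ ∫ s in (0 : ℝ)..t, M * Real.exp (-β * (t - s)) * (κ * ‖y s‖) := by
              apply intervalIntegral.integral_mono_on ht0 hint1 hint2
              intro s hs
              calc ‖NormedSpace.exp ((t - s) • A) (R s)‖
                  ≤ ‖NormedSpace.exp ((t - s) • A)‖ * ‖R s‖ :=
                    ContinuousLinearMap.le_opNorm _ _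
                _ ≤ M * Real.exp (-β * (t - s)) * (κ * ‖y s‖) := by
                    apply mul_le_mul (hdecay (t - s) (sub_nonneg.2 hs.2))
                      (hRy s (hsub hs)) (norm_nonneg _)
                    positivity
    have heqint : (∫ s in (0 : ℝ)..t, M * Real.exp (-β * (t - s)) * (κ * ‖y s‖))
        = Real.exp (-β * t) * (K * ∫ s in (0 : ℝ)..t, w s) := by
      rw [← intervalIntegral.integral_const_mul, ← intervalIntegral.integral_const_mul]
      apply intervalIntegral.integral_congr
      intro s hs
      rw [Set.uIcc_of_le ht0] at hs
      have hcs : c s = s := hceq s (hsub hs)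
      simp only [hwdef, hcs, hKdef]
      rw [show -β * (t - s) = -β * t + β * s by ring, Real.exp_add]
      ring
    have hwt : w t = Real.exp (β * t) * ‖y t‖ := by
      simp only [hwdef, hceq t ⟨ht0, htT⟩]
    have hEE : Real.exp (β * t) * Real.exp (-β * t) = 1 := by
      rw [← Real.exp_add]; simp
    rw [heqint] at h1
    have h2 := mul_le_mul_of_nonneg_left h1 (Real.exp_pos (β * t)).le
    rw [hwt]
    calc Real.exp (β * t) * ‖y t‖
        ≤ Real.exp (β * t) * (M * Real.exp (-β * t) * ‖y 0‖
            + Real.exp (-β * t) * (K * ∫ s in (0 : ℝ)..t, w s)) := h2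
      _ = (Real.exp (β * t) * Real.exp (-β * t)) * (M * ‖y 0‖)
            + (Real.exp (β * t) * Real.exp (-β * t)) * (K * ∫ s in (0 : ℝ)..t, w s) := by ring
      _ = K * (∫ s in (0 : ℝ)..t, w s) + C := by rw [hEE]; simp [hCdef]; ring
  -- Grönwall via the primitive of w
  set F : ℝ → ℝ := fun u => ∫ s in (0 : ℝ)..u, w s with hFdef
  have hFd : ∀ x : ℝ, HasDerivAt F (w x) x := fun x =>
    (hwcont.integral_hasStrictDerivAt 0 x).hasDerivAt
  have hFcont : Continuous F := by
    apply continuous_iff_continuousAt.2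
    intro x
    exact (hFd x).continuousAt
  have hFnonneg : ∀ x ∈ Set.Icc (0 : ℝ) T, 0 ≤ F x := by
    intro x hx
    exact intervalIntegral.integral_nonneg hx.1 (fun s _ => hwnonneg s)
  have hgron : ∀ x ∈ Set.Icc (0 : ℝ) T, ‖F x‖ ≤ gronwallBound 0 K C (x - 0) := by
    apply norm_le_gronwallBound_of_norm_deriv_right_le hFcont.continuousOn
      (fun x _ => (hFd x).hasDerivWithinAt)
    · simp [hFdef]
    · intro x hx
      have hx' : x ∈ Set.Icc (0 : ℝ) T := ⟨hx.1, hx.2.le⟩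
      rw [Real.norm_of_nonneg (hwnonneg x), Real.norm_of_nonneg (hFnonneg x hx')]
      exact key x hx'
  -- bound w by C * exp (K t)
  have hwbound : ∀ t ∈ Set.Icc (0 : ℝ) T, w t ≤ C * Real.exp (K * t) := by
    intro t ht
    have h1 := key t ht
    have h2 := hgron t ht
    rw [Real.norm_of_nonneg (hFnonneg t ht), sub_zero] at h2
    have h3 : w t ≤ K * gronwallBound 0 K C t + C :=
      h1.trans (by nlinarith [mul_le_mul_of_nonneg_left h2 hK0])
    rcases eq_or_lt_of_le hK0 with hKeq | hKpos
    · rw [← hKeq] at h3 ⊢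
      simp only [zero_mul, zero_add] at h3 ⊢
      rw [Real.exp_zero]
      nlinarith
    · rw [gronwallBound_of_K_ne_0 hKpos.ne'] at h3
      have : K * (0 * Real.exp (K * t) + C / K * (Real.exp (K * t) - 1)) + C
          = C * Real.exp (K * t) := by
        field_simp
        ring
      linarith [h3, this.symm.le]
  -- conclude
  intro t ht
  have hwt : w t = Real.exp (β * t) * ‖y t‖ := by
    simp only [hwdef, hceq t ht]
  have h1 := hwbound t ht
  rw [hwt] at h1
  have hEpos : (0 : ℝ) < Real.exp (β * t) := Real.exp_pos _
  have hexple : Real.exp (K * t) / Real.exp (β * t) ≤ Real.exp (-β * t / 2) := by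
    rw [← Real.exp_sub, Real.exp_le_exp]
    have ht0 : 0 ≤ t := ht.1
    nlinarith [mul_nonneg (mul_nonneg hM0.le hκ) ht0]
  have h2 : ‖y t‖ ≤ C * Real.exp (K * t) / Real.exp (β * t) := by
    rw [le_div_iff₀ hEpos]
    nlinarith
  calc ‖y t‖ ≤ C * Real.exp (K * t) / Real.exp (β * t) := h2
    _ = C * (Real.exp (K * t) / Real.exp (β * t)) := by ring
    _ ≤ (2 * M * ‖y 0‖) * Real.exp (-β * t / 2) := by
        apply mul_le_mul _ hexple (by positivity) (by positivity)
        simp only [hCdef]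
        nlinarith [norm_nonneg (y 0)]
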